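/- arXiv:1910.02938 — 2 statements merged into one kernel-verified Lean document; each statement's English description precedes it below -/
import Mathlib

section
/- Let s = (s₁,s₂), t = (t₁,t₂) ∈ [0,∞)² with s₁ ≥ s₂ > t₁ ≥ t₂ ≥ 0, let J : H^s(Ω) → H^t(Ω) be the canonical embedding J f = f, and let J_K = J P_K. Then there exists a constant C > 0 such that for all K ∈ ℕ: ‖J − J_K‖_{H^s → H^t} ≤ C (1 + K²)^{−α/2}, where α = s₂ − t₁. -/
open MeasureTheory Complex Filter Topology

noncomputable section

instance : Fact (0 < 2 * Real.pi) := ⟨by positivity⟩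
instance : Fact (0 < Real.pi) := ⟨Real.pi_pos⟩

/-- The phase space `Ω = (ℝ/2πℤ) × (ℝ/πℤ)`. -/
abbrev Omg : Type := AddCircle (2 * Real.pi) × AddCircle Real.pi

/-- The normalised Lebesgue measure `dm = dx dy / (2π²)` on `Ω`. -/
def mOmg : Measure Omg := (ENNReal.ofReal (2 * Real.pi ^ 2))⁻¹ • volume

/-- The Fourier basis functions `e_k(x,y) = exp(i k₁ x) exp(2 i k₂ y)`. -/
def eB (k : ℤ × ℤ) : Omg → ℂ := fun p => fourier k.1 p.1 * fourier k.2 p.2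

/-- Fourier coefficient `c_k(f) = (f, e_k)_{L²}`. -/
def coef (k : ℤ × ℤ) (f : Omg → ℂ) : ℂ := ∫ p, f p * (starRingEnd ℂ) (eB k p) ∂mOmg

/-- Sobolev weight `a_s(k) = 1 + |k₁|^{2s₁} + |2k₂|^{2s₂}` (real exponents). -/
def aW (s : ℝ × ℝ) (k : ℤ × ℤ) : ℝ :=
  1 + |(k.1 : ℝ)| ^ (2 * s.1) + |2 * (k.2 : ℝ)| ^ (2 * s.2)

/-- Membership in the Sobolev space `H^s(Ω)`. -/
def MemHs (s : ℝ × ℝ) (f : Omg → ℂ) : Prop :=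
  MemLp f 2 mOmg ∧ Summable (fun k => aW s k * ‖coef k f‖ ^ 2)

/-- The Sobolev norm `‖f‖_{H^s}`. -/
def normHs (s : ℝ × ℝ) (f : Omg → ℂ) : ℝ :=
  Real.sqrt (∑' k, aW s k * ‖coef k f‖ ^ 2)

/-- The doubling map `ℝ/πℤ → ℝ/2πℤ`, `y ↦ 2y`. -/
def dbl : AddCircle Real.pi → AddCircle (2 * Real.pi) :=
  AddCircle.equivAddCircle Real.pi (2 * Real.pi) Real.pi_ne_zero (by positivity)

/-- The inverse billiard collision map `φ(x,y) = (x - π + 2y, y)`. -/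
def phi : Omg → Omg :=
  fun p => (p.1 - ((Real.pi : ℝ) : AddCircle (2 * Real.pi)) + dbl p.2, p.2)

/-- The composition operator `(C_φ f)(x,y) = f(φ(x,y))`. -/
def Cphi : (Omg → ℂ) → (Omg → ℂ) := fun f p => f (phi p)

/-- The multiplication operator `(M_w f)(x,y) = w(x,y) f(x,y)`. -/
def Mw (w : Omg → ℝ) : (Omg → ℂ) → (Omg → ℂ) := fun f p => (w p : ℂ) * f p

/-- The transfer operator `L = M_w C_φ`. -/
def Lop (w : Omg → ℝ) : (Omg → ℂ) → (Omg → ℂ) := fun f => Mw w (Cphi f)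

/-- The frequency cut-off set `Λ_K = {k : |k₁| < K, |k₂| < K}`. -/
def Lam (K : ℕ) : Finset (ℤ × ℤ) := Finset.Ioo (-(K : ℤ)) (K : ℤ) ×ˢ Finset.Ioo (-(K : ℤ)) (K : ℤ)

/-- The Fourier projection `P_Λ f = ∑_{k ∈ Λ} c_k(f) e_k`. -/
def PL (Λ : Finset (ℤ × ℤ)) : (Omg → ℂ) → (Omg → ℂ) :=
  fun f p => ∑ k ∈ Λ, coef k f * eB k p

/-- The finite-rank approximation `L_K = P_K M_w C_φ P_K`. -/
def LK (w : Omg → ℝ) (K : ℕ) : (Omg → ℂ) → (Omg → ℂ) :=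
  fun f => PL (Lam K) (Lop w (PL (Lam K) f))

/-- Operator norm of a map `T`, viewed from `H^s` to `H^t`. -/
def opN (s t : ℝ × ℝ) (T : (Omg → ℂ) → (Omg → ℂ)) : ℝ :=
  sInf {M : ℝ | 0 ≤ M ∧ ∀ f, MemHs s f → normHs t (T f) ≤ M * normHs s f}

/-- `‖w‖_∞` for a (positive bounded) weight. -/
def wSup (w : Omg → ℝ) : ℝ := sSup (Set.range w)

/-- The standing assumptions on the weight `w`: smooth, positive, bounded away from
zero, `‖w‖_∞ < 1`, and independent of the first argument. -/
structure GoodWeight (w : Omg → ℝ) : Prop where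
  pos : ∀ p, 0 < w p
  smooth : ∃ W : ℝ → ℝ, ContDiff ℝ (⊤ : ℕ∞) W ∧
    ∀ (x : AddCircle (2 * Real.pi)) (y : ℝ), w (x, (y : AddCircle Real.pi)) = W y
  bdd_below : ∃ ε > 0, ∀ p, ε ≤ w p
  lt_one : sSup (Set.range w) < 1
  indep : ∀ (x x' : AddCircle (2 * Real.pi)) (y : AddCircle Real.pi), w (x, y) = w (x', y)

/-- The matrix `A = [[1,0],[1,1]]` acting on frequencies `(k₁,k₂) ↦ (k₁, k₁+k₂)`. -/
def Amap : ℤ × ℤ → ℤ × ℤ := fun k => (k.1, k.1 + k.2)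

/-- `IsD i j f g` : `g = D_x^i D_y^j f` in the weak (Fourier) sense, both in `L²`. -/
def IsD (i j : ℕ) (f g : Omg → ℂ) : Prop :=
  MemLp f 2 mOmg ∧ MemLp g 2 mOmg ∧
    ∀ k : ℤ × ℤ, coef k g = (Complex.I * (k.1 : ℂ)) ^ i * (2 * Complex.I * (k.2 : ℂ)) ^ j * coef k f

namespace Stmt3Aux

instance : IsFiniteMeasure (volume : Measure Omg) := by
  rw [Measure.volume_eq_prod]; infer_instance

instance : IsFiniteMeasure mOmg := by
  constructor
  rw [mOmg, Measure.smul_apply, smul_eq_mul]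
  exact ENNReal.mul_lt_top (by simp [ENNReal.inv_lt_top, ENNReal.ofReal_pos]; positivity)
    (measure_lt_top _ _)

lemma eB_cont (k : ℤ × ℤ) : Continuous (eB k) :=
  ((map_continuous (fourier k.1)).comp continuous_fst).mul
    ((map_continuous (fourier k.2)).comp continuous_snd)

lemma cont_integrable {g : Omg → ℂ} (hg : Continuous g) : Integrable g mOmg :=
  hg.integrable_of_hasCompactSupport (HasCompactSupport.of_compactSpace g)

lemma integral_fourier_haar {T : ℝ} [hT : Fact (0 < T)] (n : ℤ) :
    ∫ x : AddCircle T, fourier n x ∂AddCircle.haarAddCircle = if n = 0 then 1 else 0 := by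
  split_ifs with h
  · simp [h]
  · exact integral_eq_zero_of_add_right_eq_neg (fourier_add_half_inv_index h hT.out)

lemma integral_fourier_vol {T : ℝ} [hT : Fact (0 < T)] (n : ℤ) :
    ∫ x : AddCircle T, fourier n x ∂volume = if n = 0 then (T : ℂ) else 0 := by
  rw [AddCircle.volume_eq_smul_haarAddCircle, integral_smul_measure, integral_fourier_haar,
    ENNReal.toReal_ofReal hT.out.le]
  split_ifs <;> simp

lemma integral_fourier_mul_conj {T : ℝ} [hT : Fact (0 < T)] (j k : ℤ) :
    ∫ x : AddCircle T, fourier j x * (starRingEnd ℂ) (fourier k x) ∂volume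
      = if j = k then (T : ℂ) else 0 := by
  simp_rw [← fourier_neg, ← fourier_add, integral_fourier_vol]
  congr 1
  simp [sub_eq_zero, eq_comm, add_neg_eq_zero]

lemma coef_eB (j k : ℤ × ℤ) : coef k (eB j) = if j = k then 1 else 0 := by
  have h1 : ∀ p : Omg, eB j p * (starRingEnd ℂ) (eB k p)
      = (fourier j.1 p.1 * (starRingEnd ℂ) (fourier k.1 p.1))
        * (fourier j.2 p.2 * (starRingEnd ℂ) (fourier k.2 p.2)) := by
    intro p; simp [eB, map_mul]; ring
  rw [coef]
  simp_rw [h1]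
  rw [mOmg, integral_smul_measure, Measure.volume_eq_prod,
    integral_prod_mul (fun x => fourier j.1 x * (starRingEnd ℂ) (fourier k.1 x))
      (fun y => fourier j.2 y * (starRingEnd ℂ) (fourier k.2 y)),
    integral_fourier_mul_conj, integral_fourier_mul_conj]
  rw [ENNReal.toReal_inv, ENNReal.toReal_ofReal (by positivity)]
  have hπ := Real.pi_ne_zero
  by_cases h1 : j.1 = k.1 <;> by_cases h2 : j.2 = k.2 <;>
    simp [h1, h2, Prod.ext_iff, real_smul]
  have hc : (Real.pi : ℂ) ≠ 0 := Complex.ofReal_ne_zero.mpr hπ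
  field_simp

lemma memLp_integrable_conj {f : Omg → ℂ} (hf : MemLp f 2 mOmg) (k : ℤ × ℤ) :
    Integrable (fun p => f p * (starRingEnd ℂ) (eB k p)) mOmg := by
  have hint : Integrable f mOmg := hf.integrable one_le_two
  have hb : ∃ C, ∀ p : Omg, ‖(starRingEnd ℂ) (eB k p)‖ ≤ C := by
    refine ⟨1, fun p => ?_⟩
    simp [eB, Circle.norm_coe]
  have := (hint.bdd_mul ((Complex.continuous_conj.comp (eB_cont k)).aestronglyMeasurable) (Filter.Eventually.of_forall hb.choose_spec))
  exact this.congr (Filter.Eventually.of_forall fun p => mul_comm _ _)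

lemma coef_PL {f : Omg → ℂ} (Λ : Finset (ℤ × ℤ)) (k : ℤ × ℤ) :
    coef k (PL Λ f) = if k ∈ Λ then coef k f else 0 := by
  have h1 : coef k (PL Λ f) = ∑ j ∈ Λ, coef j f * coef k (eB j) := by
    rw [coef]
    have : ∀ p : Omg, PL Λ f p * (starRingEnd ℂ) (eB k p)
        = ∑ j ∈ Λ, coef j f * (eB j p * (starRingEnd ℂ) (eB k p)) := by
      intro p; rw [PL, Finset.sum_mul]; simp [mul_assoc]
    simp_rw [this]
    rw [integral_finset_sum]
    · exact Finset.sum_congr rfl fun j _ => by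
        rw [integral_const_mul]; rfl
    · intro j _
      exact (cont_integrable (((eB_cont j).mul
        (Complex.continuous_conj.comp (eB_cont k))))).const_mul _
  rw [h1]
  simp_rw [coef_eB, mul_ite, mul_one, mul_zero]
  simp [Finset.sum_ite_eq]

lemma coef_sub_PL {f : Omg → ℂ} (hf : MemLp f 2 mOmg) (Λ : Finset (ℤ × ℤ)) (k : ℤ × ℤ) :
    coef k (fun p => f p - PL Λ f p) = if k ∈ Λ then 0 else coef k f := by
  have h1 : coef k (fun p => f p - PL Λ f p) = coef k f - coef k (PL Λ f) := by
    rw [coef, coef, coef, ← integral_sub (memLp_integrable_conj hf k)]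
    · congr 1; ext p; ring
    · apply cont_integrable
      exact (continuous_finset_sum _ fun j _ => continuous_const.mul (eB_cont j)).mul
        (Complex.continuous_conj.comp (eB_cont k))
  rw [h1, coef_PL]
  split_ifs <;> simp

lemma key_real {s₁ s₂ t₁ t₂ : ℝ} (Kr A B : ℝ) (ht₂ : 0 ≤ t₂) (htt : t₂ ≤ t₁) (hts : t₁ < s₂)
    (hss : s₂ ≤ s₁) (hK : 1 ≤ Kr) (hA : 0 ≤ A) (hB : 0 ≤ B) (hk : Kr ≤ A ∨ 2 * Kr ≤ B) :
    1 + A ^ (2 * t₁) + B ^ (2 * t₂) ≤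
      3 * 2 ^ (2 * s₂) * Kr ^ (-(2 * (s₂ - t₁))) * (1 + A ^ (2 * s₁) + B ^ (2 * s₂)) := by
  have hKr0 : (0:ℝ) < Kr := lt_of_lt_of_le one_pos hK
  set α := s₂ - t₁ with hα
  have hα0 : 0 < α := by simp [hα]; linarith
  set S := 1 + A ^ (2 * s₁) + B ^ (2 * s₂) with hSdef
  have hAs : 0 ≤ A ^ (2 * s₁) := Real.rpow_nonneg hA _
  have hBs : 0 ≤ B ^ (2 * s₂) := Real.rpow_nonneg hB _
  have hS1 : (1:ℝ) ≤ S := by simp [hSdef]; linarith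
  set c := Kr ^ (2 * α) with hcdef
  have hc0 : 0 < c := Real.rpow_pos_of_pos hKr0 _
  set M := (2:ℝ) ^ (2 * s₂) with hMdef
  have hM1 : (1:ℝ) ≤ M := Real.one_le_rpow one_le_two (by linarith)
  have hKS : Kr ^ (2 * s₂) ≤ S := by
    rcases hk with h | h
    · have h1 : Kr ^ (2 * s₂) ≤ Kr ^ (2 * s₁) :=
        Real.rpow_le_rpow_of_exponent_le hK (by linarith)
      have h2 : Kr ^ (2 * s₁) ≤ A ^ (2 * s₁) :=
        Real.rpow_le_rpow hKr0.le h (by linarith)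
      calc Kr ^ (2*s₂) ≤ A ^ (2*s₁) := h1.trans h2
        _ ≤ S := by simp [hSdef]; linarith
    · have h2 : Kr ^ (2 * s₂) ≤ B ^ (2 * s₂) :=
        Real.rpow_le_rpow hKr0.le (by linarith) (by linarith)
      calc Kr ^ (2*s₂) ≤ B ^ (2*s₂) := h2
        _ ≤ S := by simp [hSdef]; linarith
  have h1 : 1 * c ≤ M * S := by
    have : c ≤ Kr ^ (2 * s₂) := Real.rpow_le_rpow_of_exponent_le hK (by simp [hα]; linarith)
    have := this.trans hKS
    nlinarith
  have h2 : A ^ (2 * t₁) * c ≤ M * S := by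
    rcases le_or_gt Kr A with h | h
    · have hA1 : (1:ℝ) ≤ A := hK.trans h
      have e1 : c ≤ A ^ (2 * α) := Real.rpow_le_rpow hKr0.le h (by linarith)
      have e2 : A ^ (2 * t₁) * A ^ (2 * α) = A ^ (2 * s₂) := by
        rw [← Real.rpow_add (by linarith)]; ring_nf; congr 1; rw [hα]; ring
      have e3 : A ^ (2 * s₂) ≤ A ^ (2 * s₁) :=
        Real.rpow_le_rpow_of_exponent_le hA1 (by linarith)
      have e4 : A ^ (2 * t₁) * c ≤ A ^ (2 * t₁) * A ^ (2 * α) :=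
        mul_le_mul_of_nonneg_left e1 (Real.rpow_nonneg hA _)
      have e5 : A ^ (2 * s₁) ≤ S := by simp [hSdef]; linarith
      nlinarith [Real.rpow_nonneg hA (2*t₁)]
    · have hB2 : 2 * Kr ≤ B := hk.resolve_left (not_le.mpr h)
      have e1 : A ^ (2 * t₁) ≤ Kr ^ (2 * t₁) :=
        Real.rpow_le_rpow hA h.le (by linarith)
      have e2 : Kr ^ (2 * t₁) * c = Kr ^ (2 * s₂) := by
        rw [hcdef, ← Real.rpow_add hKr0]; ring_nf; congr 1; rw [hα]; ring
      have e4 : A ^ (2 * t₁) * c ≤ Kr ^ (2 * t₁) * c :=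
        mul_le_mul_of_nonneg_right e1 hc0.le
      rw [e2] at e4
      nlinarith [hKS]
  have h3 : B ^ (2 * t₂) * c ≤ M * S := by
    rcases le_or_gt B (2 * Kr) with h | h
    · have h2K : (1:ℝ) ≤ 2 * Kr := by linarith
      have e1 : B ^ (2 * t₂) ≤ (2 * Kr) ^ (2 * t₂) :=
        Real.rpow_le_rpow hB h (by linarith)
      have e2 : (2 * Kr) ^ (2 * t₂) ≤ (2 * Kr) ^ (2 * t₁) :=
        Real.rpow_le_rpow_of_exponent_le h2K (by linarith)
      have e3 : c ≤ (2 * Kr) ^ (2 * α) :=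
        Real.rpow_le_rpow hKr0.le (by linarith) (by linarith)
      have e4 : (2 * Kr) ^ (2 * t₁) * (2 * Kr) ^ (2 * α) = (2 * Kr) ^ (2 * s₂) := by
        rw [← Real.rpow_add (by linarith)]; ring_nf; congr 1; rw [hα]; ring
      have e5 : (2 * Kr) ^ (2 * s₂) = M * Kr ^ (2 * s₂) := by
        rw [hMdef, ← Real.mul_rpow (by norm_num) hKr0.le]
      have e6 : B ^ (2 * t₂) * c ≤ (2 * Kr) ^ (2 * t₁) * (2 * Kr) ^ (2 * α) := by
        apply mul_le_mul (e1.trans e2) e3 hc0.le (Real.rpow_nonneg (by linarith) _)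
      rw [e4, e5] at e6
      have : M * Kr ^ (2 * s₂) ≤ M * S := mul_le_mul_of_nonneg_left hKS (by linarith)
      linarith
    · have hB1 : (1:ℝ) ≤ B := by linarith
      have e1 : B ^ (2 * t₂) ≤ B ^ (2 * t₁) :=
        Real.rpow_le_rpow_of_exponent_le hB1 (by linarith)
      have e3 : c ≤ B ^ (2 * α) := Real.rpow_le_rpow hKr0.le (by linarith) (by linarith)
      have e4 : B ^ (2 * t₁) * B ^ (2 * α) = B ^ (2 * s₂) := by
        rw [← Real.rpow_add (by linarith)]; ring_nf; congr 1; rw [hα]; ring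
      have e6 : B ^ (2 * t₂) * c ≤ B ^ (2 * t₁) * B ^ (2 * α) :=
        mul_le_mul e1 e3 hc0.le (Real.rpow_nonneg (by linarith) _)
      rw [e4] at e6
      have : B ^ (2 * s₂) ≤ S := by simp [hSdef]; linarith
      nlinarith
  have hsum : (1 + A ^ (2 * t₁) + B ^ (2 * t₂)) * c ≤ 3 * M * S := by linarith
  have hrw : Kr ^ (-(2 * α)) = c⁻¹ := by
    rw [hcdef, ← Real.rpow_neg hKr0.le]
  rw [hrw]
  rw [show 3 * M * c⁻¹ * S = (3 * M * S) / c by field_simp]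
  exact (le_div_iff₀ hc0).mpr hsum

lemma aW_nonneg (s : ℝ × ℝ) (k : ℤ × ℤ) : 0 ≤ aW s k := by
  rw [aW]; positivity

lemma not_mem_Lam {K : ℕ} {k : ℤ × ℤ} (hm : k ∉ Lam K) :
    (K:ℝ) ≤ |((k.1 : ℤ) : ℝ)| ∨ 2 * (K:ℝ) ≤ |2 * ((k.2 : ℤ) : ℝ)| := by
  have h : (K:ℤ) ≤ |k.1| ∨ (K:ℤ) ≤ |k.2| := by
    simp only [Lam, Finset.mem_product, Finset.mem_Ioo] at hm
    rw [le_abs, le_abs]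
    omega
  rcases h with h | h
  · left
    rw [← Int.cast_abs]
    exact_mod_cast h
  · right
    rw [abs_mul, ← Int.cast_abs]
    have h1 : (K:ℝ) ≤ ((|k.2| : ℤ) : ℝ) := by exact_mod_cast h
    have h2 : |(2:ℝ)| = 2 := by norm_num
    rw [h2]; linarith

end Stmt3Aux

open Stmt3Aux

/-- Lemma 3.1: `‖J − J_K‖_{H^s→H^t} ≤ C (1+K²)^{−α/2}`. -/
theorem stmt3 (s₁ s₂ t₁ t₂ : ℝ) (ht₂ : 0 ≤ t₂) (htt : t₂ ≤ t₁) (hts : t₁ < s₂) (hss : s₂ ≤ s₁) :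
    ∃ C > 0, ∀ K : ℕ, 1 ≤ K → ∀ f : Omg → ℂ, MemHs (s₁, s₂) f →
      normHs (t₁, t₂) (fun p => f p - PL (Lam K) f p) ≤
        C * (1 + (K : ℝ) ^ 2) ^ (-((s₂ - t₁) / 2)) * normHs (s₁, s₂) f := by
  set α := s₂ - t₁ with hα
  have hα0 : 0 < α := by simp only [hα]; linarith
  refine ⟨Real.sqrt (3 * 2 ^ (2 * s₂)) * 2 ^ (α / 2), by positivity, ?_⟩
  intro K hK f hf
  have hK1 : (1:ℝ) ≤ (K:ℝ) := by exact_mod_cast hK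
  have hKpos : (0:ℝ) < (K:ℝ) := by linarith
  set D := 3 * (2:ℝ) ^ (2 * s₂) with hD
  have hD0 : (0:ℝ) < D := by positivity
  set X := (K:ℝ) ^ (-(2 * α)) with hX
  have hX0 : (0:ℝ) < X := Real.rpow_pos_of_pos hKpos _
  have hcoef := coef_sub_PL hf.1 (Lam K)
  set F := fun k : ℤ × ℤ => aW (t₁, t₂) k * ‖coef k (fun p => f p - PL (Lam K) f p)‖ ^ 2 with hF
  set G := fun k : ℤ × ℤ => aW (s₁, s₂) k * ‖coef k f‖ ^ 2 with hG
  have hGnn : ∀ k, 0 ≤ G k := fun k => mul_nonneg (aW_nonneg _ _) (by positivity)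
  have hbound : ∀ k, F k ≤ D * X * G k := by
    intro k
    by_cases hm : k ∈ Lam K
    · have : F k = 0 := by simp [hF, hcoef k, hm]
      rw [this]
      exact mul_nonneg (by positivity) (hGnn k)
    · have hFk : F k = aW (t₁, t₂) k * ‖coef k f‖ ^ 2 := by
        simp [hF, hcoef k, hm]
      rw [hFk, hG, show D * X * (aW (s₁, s₂) k * ‖coef k f‖ ^ 2)
            = (D * X * aW (s₁, s₂) k) * ‖coef k f‖ ^ 2 by ring]
      apply mul_le_mul_of_nonneg_right _ (by positivity)
      have hkey := key_real (s₁ := s₁) (s₂ := s₂) (t₁ := t₁) (t₂ := t₂)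
        (K:ℝ) |((k.1 : ℤ) : ℝ)| |2 * ((k.2 : ℤ) : ℝ)| ht₂ htt hts hss hK1
        (abs_nonneg _) (abs_nonneg _) (not_mem_Lam hm)
      simpa [aW, hD, hX, mul_assoc] using hkey
  have hGsum : Summable G := hf.2
  have hsum2 : Summable (fun k => D * X * G k) := hGsum.mul_left _
  have hFsum : Summable F :=
    Summable.of_nonneg_of_le (fun k => mul_nonneg (aW_nonneg _ _) (by positivity)) hbound hsum2
  have htsum : ∑' k, F k ≤ D * X * ∑' k, G k := by
    calc ∑' k, F k ≤ ∑' k, D * X * G k := Summable.tsum_le_tsum hbound hFsum hsum2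
      _ = D * X * ∑' k, G k := tsum_mul_left
  have hTnn : (0:ℝ) ≤ ∑' k, G k := tsum_nonneg hGnn
  have hnormt : normHs (t₁, t₂) (fun p => f p - PL (Lam K) f p) = Real.sqrt (∑' k, F k) := rfl
  have hnorms : normHs (s₁, s₂) f = Real.sqrt (∑' k, G k) := rfl
  rw [hnormt, hnorms]
  have hstep : Real.sqrt (∑' k, F k)
      ≤ Real.sqrt D * Real.sqrt X * Real.sqrt (∑' k, G k) := by
    rw [← Real.sqrt_mul hD0.le, ← Real.sqrt_mul (by positivity)]
    exact Real.sqrt_le_sqrt htsum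
  have hsqX : Real.sqrt X = (K:ℝ) ^ (-α) := by
    have hXe : X = ((K:ℝ) ^ (-α)) ^ 2 := by
      rw [hX, ← Real.rpow_natCast ((K:ℝ) ^ (-α)) 2, ← Real.rpow_mul hKpos.le]
      congr 1; push_cast; ring
    rw [hXe, Real.sqrt_sq (Real.rpow_nonneg hKpos.le _)]
  have hKα : (K:ℝ) ^ (-α) ≤ 2 ^ (α / 2) * (1 + (K:ℝ) ^ 2) ^ (-(α / 2)) := by
    have h2K : (1:ℝ) + (K:ℝ) ^ 2 ≤ 2 * (K:ℝ) ^ 2 := by nlinarith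
    have e1 : ((2:ℝ) * (K:ℝ) ^ 2) ^ (-(α / 2)) ≤ (1 + (K:ℝ) ^ 2) ^ (-(α / 2)) :=
      Real.rpow_le_rpow_of_nonpos (by positivity) h2K (by linarith)
    have e2 : ((2:ℝ) * (K:ℝ) ^ 2) ^ (-(α / 2))
        = (2:ℝ) ^ (-(α / 2)) * ((K:ℝ) ^ 2) ^ (-(α / 2)) :=
      Real.mul_rpow (by norm_num) (by positivity)
    have e3 : (((K:ℝ) ^ 2 : ℝ)) ^ (-(α / 2)) = (K:ℝ) ^ (-α) := by
      rw [← Real.rpow_natCast (K:ℝ) 2, ← Real.rpow_mul hKpos.le]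
      congr 1; push_cast; ring
    have e4 : (K:ℝ) ^ (-α) = 2 ^ (α / 2) * ((2:ℝ) ^ (-(α / 2)) * (K:ℝ) ^ (-α)) := by
      rw [← mul_assoc, ← Real.rpow_add two_pos]
      simp
    rw [e4, ← e3, ← e2]
    exact mul_le_mul_of_nonneg_left e1 (by positivity)
  calc Real.sqrt (∑' k, F k)
      ≤ Real.sqrt D * ((K:ℝ) ^ (-α)) * Real.sqrt (∑' k, G k) := by rw [← hsqX]; exact hstep
    _ ≤ Real.sqrt D * (2 ^ (α / 2) * (1 + (K:ℝ) ^ 2) ^ (-(α / 2))) * Real.sqrt (∑' k, G k) := by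
        apply mul_le_mul_of_nonneg_right _ (Real.sqrt_nonneg _)
        exact mul_le_mul_of_nonneg_left hKα (Real.sqrt_nonneg _)
    _ = Real.sqrt (3 * 2 ^ (2 * s₂)) * 2 ^ (α / 2) * (1 + (K:ℝ) ^ 2) ^ (-(α / 2)) *
          Real.sqrt (∑' k, G k) := by rw [hD]; ring


end
end

section
/- For every n ∈ ℕ and every f ∈ H^{(1,1)}(Ω), the function C_φ^n f lies in the domain of D_y and D_y (C_φ^n f) = 2n C_φ^n (D_x f) + C_φ^n (D_y f). -/
open MeasureTheory Complex Filter Topology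

noncomputable section

lemma dbl_cont : Continuous dbl :=
  (AddCircle.homeomorphAddCircle Real.pi (2 * Real.pi) Real.pi_ne_zero (by positivity)).continuous

instance : IsFiniteMeasure mOmg := by
  constructor
  rw [mOmg, Measure.smul_apply, smul_eq_mul]
  exact ENNReal.mul_lt_top (by simp [Real.pi_ne_zero]; positivity) (measure_lt_top _ _)

lemma mp_phi_vol : MeasurePreserving phi (volume : Measure Omg) volume := by
  have hS : MeasurePreserving
      (fun q : AddCircle Real.pi × AddCircle (2 * Real.pi) =>
        (q.1, q.2 + (dbl q.1 - ((Real.pi : ℝ) : AddCircle (2 * Real.pi)))))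
      ((volume : Measure (AddCircle Real.pi)).prod volume)
      ((volume : Measure (AddCircle Real.pi)).prod volume) := by
    refine MeasurePreserving.skew_product
      (g := fun a c => c + (dbl a - ((Real.pi : ℝ) : AddCircle (2 * Real.pi))))
      (MeasurePreserving.id _) ?_ ?_
    · exact measurable_snd.add (((dbl_cont.comp continuous_fst).measurable).sub measurable_const)
    · exact Filter.Eventually.of_forall fun y => map_add_right_eq_self _ _
  have hphi : phi = Prod.swap ∘ (fun q : AddCircle Real.pi × AddCircle (2 * Real.pi) =>
      (q.1, q.2 + (dbl q.1 - ((Real.pi : ℝ) : AddCircle (2 * Real.pi))))) ∘ Prod.swap := by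
    funext p
    simp only [phi, Function.comp_apply, Prod.swap]
    ext
    · show p.1 - _ + dbl p.2 = p.1 + (dbl p.2 - _); abel
    · rfl
  rw [hphi, Measure.volume_eq_prod]
  exact Measure.measurePreserving_swap.comp (hS.comp Measure.measurePreserving_swap)

lemma mp_phi : MeasurePreserving phi mOmg mOmg := by
  refine ⟨mp_phi_vol.measurable, ?_⟩
  rw [mOmg, Measure.map_smul, mp_phi_vol.map_eq]

lemma eB_phi (k : ℤ × ℤ) (p : Omg) :
    eB k p = (-1 : ℂ) ^ k.1 * eB (k.1, k.2 - k.1) (phi p) := by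
  obtain ⟨x, y⟩ := p
  refine QuotientAddGroup.induction_on x fun a => QuotientAddGroup.induction_on y fun b => ?_
  have hdbl : dbl ((b : ℝ) : AddCircle Real.pi)
      = ((b * (Real.pi⁻¹ * (2 * Real.pi)) : ℝ) : AddCircle (2 * Real.pi)) :=
    AddCircle.equivAddCircle_apply_mk Real.pi (2 * Real.pi) Real.pi_ne_zero (by positivity) b
  have hphi : phi (((a : ℝ) : AddCircle (2 * Real.pi)), ((b : ℝ) : AddCircle Real.pi)) =
      (((a - Real.pi + b * (Real.pi⁻¹ * (2 * Real.pi)) : ℝ) : AddCircle (2 * Real.pi)),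
        ((b : ℝ) : AddCircle Real.pi)) := by
    simp only [phi, hdbl]
    rfl
  have hneg : ((-1 : ℂ)) ^ k.1 = Complex.exp ((k.1 : ℂ) * ((Real.pi : ℂ) * Complex.I)) := by
    rw [Complex.exp_int_mul, Complex.exp_pi_mul_I]
  rw [hphi, hneg]
  simp only [eB, fourier_coe_apply]
  rw [← Complex.exp_add, ← Complex.exp_add, ← Complex.exp_add]
  congr 1
  have hπ : (Real.pi : ℂ) ≠ 0 := by exact_mod_cast Real.pi_ne_zero
  push_cast
  field_simp
  ring

lemma eB_cont (k : ℤ × ℤ) : Continuous (eB k) :=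
  ((map_continuous (fourier k.1)).comp continuous_fst).mul
    ((map_continuous (fourier k.2)).comp continuous_snd)

lemma coef_Cphi (f : Omg → ℂ) (hf : AEStronglyMeasurable f mOmg) (k : ℤ × ℤ) :
    coef k (Cphi f) = (-1 : ℂ) ^ k.1 * coef (k.1, k.2 - k.1) f := by
  set G : Omg → ℂ := fun q => (-1 : ℂ) ^ k.1 * (f q * (starRingEnd ℂ) (eB (k.1, k.2 - k.1) q))
    with hGdef
  have hG : AEStronglyMeasurable G mOmg :=
    aestronglyMeasurable_const.mul
      (hf.mul (Continuous.aestronglyMeasurable (continuous_star.comp (eB_cont _))))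
  have key : ∀ p, Cphi f p * (starRingEnd ℂ) (eB k p) = G (phi p) := by
    intro p
    rw [hGdef]
    simp only [Cphi]
    rw [eB_phi k p, map_mul]
    have : (starRingEnd ℂ) ((-1 : ℂ) ^ k.1) = (-1 : ℂ) ^ k.1 := by
      rw [map_zpow₀]; simp
    rw [this]; ring
  calc coef k (Cphi f) = ∫ p, G (phi p) ∂mOmg := by
        unfold coef; exact integral_congr_ae (Filter.Eventually.of_forall key)
    _ = ∫ q, G q ∂mOmg := by
        rw [← MeasureTheory.integral_map mp_phi.measurable.aemeasurable
          (by rwa [mp_phi.map_eq]), mp_phi.map_eq]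
    _ = (-1 : ℂ) ^ k.1 * coef (k.1, k.2 - k.1) f := by
        unfold coef; rw [hGdef, integral_const_mul]

lemma coef_Cphi_iter (f : Omg → ℂ) (hf : MemLp f 2 mOmg) (n : ℕ) :
    MemLp (Cphi^[n] f) 2 mOmg ∧
    ∀ k : ℤ × ℤ, coef k (Cphi^[n] f) =
      (-1 : ℂ) ^ ((n : ℤ) * k.1) * coef (k.1, k.2 - (n : ℤ) * k.1) f := by
  induction n with
  | zero => simpa using hf
  | succ n ih =>
    have hstep : Cphi^[n + 1] f = Cphi (Cphi^[n] f) := by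
      rw [Function.iterate_succ']; rfl
    have hmem : MemLp (Cphi^[n + 1] f) 2 mOmg := by
      rw [hstep]
      exact MemLp.comp_measurePreserving ih.1 mp_phi
    refine ⟨hmem, fun k => ?_⟩
    rw [hstep, coef_Cphi _ ih.1.aestronglyMeasurable k, ih.2]
    have h1 : ((-1 : ℂ)) ^ k.1 * (-1 : ℂ) ^ ((n : ℤ) * k.1)
        = (-1 : ℂ) ^ (((n : ℕ) + 1 : ℤ) * k.1) := by
      rw [← zpow_add₀ (by norm_num : (-1 : ℂ) ≠ 0)]
      congr 1; ring
    have h2 : k.2 - k.1 - (n : ℤ) * k.1 = k.2 - ((n : ℕ) + 1 : ℤ) * k.1 := by ring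
    rw [← mul_assoc, h1, h2]
    norm_num

lemma integrable_coef (f : Omg → ℂ) (hf : MemLp f 2 mOmg) (k : ℤ × ℤ) :
    Integrable (fun p => f p * (starRingEnd ℂ) (eB k p)) mOmg := by
  have hint : Integrable f mOmg := hf.integrable one_le_two
  have hbdd : ∃ C, ∀ p : Omg, ‖(starRingEnd ℂ) (eB k p)‖ ≤ C := by
    refine ⟨1, fun p => ?_⟩
    rw [RCLike.norm_conj]
    simp only [eB, norm_mul, fourier_apply]
    rw [Circle.norm_coe, Circle.norm_coe]
    norm_num
  have := Integrable.bdd_mul hint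
    (Continuous.aestronglyMeasurable (continuous_star.comp (eB_cont k))) (Filter.Eventually.of_forall hbdd.choose_spec)
  simpa [mul_comm] using this

lemma coef_add_smul (a : ℂ) (A B : Omg → ℂ) (hA : MemLp A 2 mOmg) (hB : MemLp B 2 mOmg)
    (k : ℤ × ℤ) :
    coef k (fun p => a * A p + B p) = a * coef k A + coef k B := by
  unfold coef
  have : ∀ p : Omg, (a * A p + B p) * (starRingEnd ℂ) (eB k p)
      = a * (A p * (starRingEnd ℂ) (eB k p)) + B p * (starRingEnd ℂ) (eB k p) := fun p => by ring
  simp only [this]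
  rw [integral_add ((integrable_coef A hA k).const_mul a) (integrable_coef B hB k),
    integral_const_mul]

/-- Lemma 2.4(iv): `D_y C_φ^n = 2n C_φ^n D_x + C_φ^n D_y` on `H^{(1,1)}`. -/
theorem stmt15 (n : ℕ) (hn : 1 ≤ n) (f fx fy : Omg → ℂ)
    (hf : MemHs (1, 1) f) (hfx : IsD 1 0 f fx) (hfy : IsD 0 1 f fy) :
    IsD 0 1 (Cphi^[n] f) (fun p => 2 * (n : ℂ) * Cphi^[n] fx p + Cphi^[n] fy p) := by
  obtain ⟨hf2, -⟩ := hf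
  obtain ⟨-, hfx2, hfxk⟩ := hfx
  obtain ⟨-, hfy2, hfyk⟩ := hfy
  obtain ⟨hfn, hcfn⟩ := coef_Cphi_iter f hf2 n
  obtain ⟨hfxn, hcfxn⟩ := coef_Cphi_iter fx hfx2 n
  obtain ⟨hfyn, hcfyn⟩ := coef_Cphi_iter fy hfy2 n
  refine ⟨hfn, (hfxn.const_mul _).add hfyn, fun k => ?_⟩
  rw [coef_add_smul (2 * (n : ℂ)) _ _ hfxn hfyn k, hcfn, hcfxn, hcfyn,
    hfxk (k.1, k.2 - (n : ℤ) * k.1), hfyk (k.1, k.2 - (n : ℤ) * k.1)]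
  push_cast
  ring

end
end
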